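/- For every integer n ≥ 2, the 2-adic valuation of the integer 2·C(2^{n+1} − 3, 2^n − 2) − 4·C(2^{n+1} − 4, 2^n − 3) equals n. -/

import Mathlib

private lemma digits_sum_pow_sub_one : ∀ k : ℕ, (Nat.digits 2 (2 ^ k - 1)).sum = k := by
  intro k
  induction k with
  | zero => simp
  | succ k ih =>
    have hpos : 0 < 2 ^ k := Nat.pow_pos (by norm_num)
    have h1 : 0 < 2 ^ (k + 1) - 1 := by
      have : 2 ^ k + 2 ^ k = 2 ^ (k + 1) := by ring
      omega
    rw [Nat.digits_def' (by norm_num : 1 < 2) h1]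
    have hmod : (2 ^ (k + 1) - 1) % 2 = 1 := by
      have : 2 ^ (k + 1) = 2 * 2 ^ k := by ring
      omega
    have hdiv : (2 ^ (k + 1) - 1) / 2 = 2 ^ k - 1 := by
      have : 2 ^ (k + 1) = 2 * 2 ^ k := by ring
      omega
    rw [hmod, hdiv, List.sum_cons, ih]
    omega

private lemma digits_sum_pow_sub_two {k : ℕ} (hk : 1 ≤ k) :
    (Nat.digits 2 (2 ^ k - 2)).sum = k - 1 := by
  rcases Nat.eq_or_lt_of_le hk with h | h
  · subst h; simp
  · obtain ⟨j, rfl⟩ : ∃ j, k = j + 1 := ⟨k - 1, by omega⟩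
    have hpos : 2 ≤ 2 ^ j := by
      calc (2 : ℕ) = 2 ^ 1 := rfl
      _ ≤ 2 ^ j := Nat.pow_le_pow_right (by norm_num) (by omega)
    have hk2 : 2 ^ (j + 1) = 2 * 2 ^ j := by ring
    have h1 : 0 < 2 ^ (j + 1) - 2 := by omega
    rw [Nat.digits_def' (by norm_num : 1 < 2) h1]
    have hmod : (2 ^ (j + 1) - 2) % 2 = 0 := by omega
    have hdiv : (2 ^ (j + 1) - 2) / 2 = 2 ^ j - 1 := by omega
    rw [hmod, hdiv, List.sum_cons, digits_sum_pow_sub_one]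
    omega

/-- For every `n ≥ 2`, the 2-adic valuation of the integer
`2 * C(2^(n+1) - 3, 2^n - 2) - 4 * C(2^(n+1) - 4, 2^n - 3)` equals `n`. -/
theorem padicValInt_two_involution_variety_segre_number (n : ℕ) (hn : 2 ≤ n) :
    padicValInt 2
        (2 * (Nat.choose (2 ^ (n + 1) - 3) (2 ^ n - 2) : ℤ) -
          4 * (Nat.choose (2 ^ (n + 1) - 4) (2 ^ n - 3) : ℤ)) = n := by
  have h4 : 4 ≤ 2 ^ n := by
    calc (4 : ℕ) = 2 ^ 2 := by norm_num
    _ ≤ 2 ^ n := Nat.pow_le_pow_right (by norm_num) hn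
  have heven : 2 ^ n = 2 * 2 ^ (n - 1) := by
    obtain ⟨j, hj⟩ : ∃ j, n = j + 1 := ⟨n - 1, by omega⟩
    rw [hj]; simp [hj]; ring
  set m : ℕ := 2 ^ n - 2 with hm
  have hpow : 2 ^ (n + 1) = 2 * 2 ^ n := by ring
  have hm1 : 2 ^ (n + 1) - 3 = 2 * m + 1 := by omega
  have hm2 : 2 ^ (n + 1) - 4 = 2 * m := by omega
  have hm3 : 2 ^ n - 3 = m - 1 := by omega
  have hmpos : 2 ≤ m := by omega
  -- Pascal: C(2m+1, m) = C(2m, m-1) + C(2m, m)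
  have hpascal : Nat.choose (2 * m + 1) m
      = Nat.choose (2 * m) (m - 1) + Nat.choose (2 * m) m := by
    have h := Nat.choose_succ_succ (2 * m) (m - 1)
    rw [show (m - 1).succ = m by omega] at h
    exact h
  set B : ℕ := Nat.choose (2 * m) (m - 1) with hB
  set C : ℕ := Nat.choose (2 * m) m with hC
  have hBC : B ≤ C := by
    have := Nat.choose_le_centralBinom (m - 1) m
    rwa [Nat.centralBinom] at this
  set D : ℕ := C - B with hD
  -- key identity: (m + 1) * D = C
  have hkey : (m + 1) * D = C := by
    have h1 : C * m = B * (m + 1) := by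
      have := Nat.choose_succ_right_eq (2 * m) (m - 1)
      have hmm : m - 1 + 1 = m := by omega
      have h2m : 2 * m - (m - 1) = m + 1 := by omega
      rw [hmm, h2m] at this
      rw [← hC, ← hB] at this
      exact this
    rw [hD, Nat.mul_sub, show (m + 1) * B = C * m from (mul_comm _ _).trans h1.symm,
      show (m + 1) * C = C * m + C by ring]
    omega
  have hCpos : 0 < C := Nat.choose_pos (by omega)
  have hDpos : 0 < D := by
    rcases Nat.eq_zero_or_pos D with h | h
    · rw [h, Nat.mul_zero] at hkey; omega
    · exact h
  -- the integer expression equals the natural number 2 * D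
  have hexpr : (2 * (Nat.choose (2 ^ (n + 1) - 3) (2 ^ n - 2) : ℤ) -
          4 * (Nat.choose (2 ^ (n + 1) - 4) (2 ^ n - 3) : ℤ)) = ((2 * D : ℕ) : ℤ) := by
    rw [hm1, hm2, hm3, hpascal, hD]
    push_cast [hBC]
    ring
  rw [hexpr, padicValInt.of_nat]
  haveI : Fact (Nat.Prime 2) := ⟨Nat.prime_two⟩
  -- valuation of C via Kummer
  have hvC : padicValNat 2 C = n - 1 := by
    have := sub_one_mul_padicValNat_choose_eq_sub_sum_digits (p := 2)
      (k := m) (n := 2 * m) (by omega)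
    rw [← hC] at this
    have h2m : 2 * m - m = m := by omega
    rw [h2m] at this
    have hsm : (Nat.digits 2 m).sum = n - 1 := by
      rw [hm]; exact digits_sum_pow_sub_two (by omega)
    have hs2m : (Nat.digits 2 (2 * m)).sum = n - 1 := by
      have : 2 * m = 2 ^ (n + 1) - 4 := by omega
      rw [this]
      have h1 : 0 < 2 ^ (n + 1) - 4 := by omega
      rw [Nat.digits_def' (by norm_num : 1 < 2) h1]
      have hmod : (2 ^ (n + 1) - 4) % 2 = 0 := by omega
      have hdiv : (2 ^ (n + 1) - 4) / 2 = 2 ^ n - 2 := by omega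
      rw [hmod, hdiv, List.sum_cons, digits_sum_pow_sub_two (by omega : 1 ≤ n)]
      omega
    rw [hsm, hs2m] at this
    omega
  -- valuation of D equals valuation of C since m + 1 is odd
  have hodd : padicValNat 2 (m + 1) = 0 := by
    apply padicValNat.eq_zero_of_not_dvd
    omega
  have hvD : padicValNat 2 D = n - 1 := by
    have := padicValNat.mul (p := 2) (by omega : m + 1 ≠ 0) (by omega : D ≠ 0)
    rw [hkey, hodd, zero_add] at this
    omega
  rw [padicValNat.mul (by norm_num : (2:ℕ) ≠ 0) (by omega : D ≠ 0),
    padicValNat.self (by norm_num), hvD]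
  omega
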